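/- arXiv:1707.04097 — 3 statements merged into one kernel-verified Lean document; each statement's English description precedes it below -/
import Mathlib

section
/- Let α be a terminal-free pattern with |var(α)| ≥ 2 and let Γ := {z_1, z_2, …, z_m} ⊆ var(α). The following two statements are equivalent: (a) for all z, z' ∈ Γ with z ≠ z', the pattern α can be factorised into α = β·z·γ·z'·γ'·z·δ or into α = β·z'·γ·z·γ'·z'·δ; (b) there exists a z ∈ Γ such that α can be factorised into α = β·z·γ with (Γ \ {z}) ⊆ (var(β) ∩ var(γ)). -/
private lemma indexOf_le_of_eq_append {α A rest : List ℕ} {z : ℕ}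
    (h : α = A ++ z :: rest) : α.idxOf z ≤ A.length := by
  subst h
  by_cases hz : z ∈ A
  · rw [List.idxOf_append_of_mem hz]
    exact le_of_lt (List.idxOf_lt_length_iff.mpr hz)
  · rw [List.idxOf_append_of_notMem hz]
    simp

private lemma mem_drop_occ {α A B C : List ℕ} {z w : ℕ}
    (h : α = A ++ [z] ++ B ++ [w] ++ C) :
    w ∈ α.drop (α.idxOf z + 1) := by
  have h2 : α = (A ++ [z]) ++ (B ++ [w] ++ C) := by
    rw [h]; simp only [List.append_assoc]
  have hle : α.idxOf z ≤ A.length :=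
    indexOf_le_of_eq_append (rest := B ++ [w] ++ C) (by rw [h]; simp)
  obtain ⟨n, hn⟩ : ∃ n, n = α.idxOf z + 1 := ⟨_, rfl⟩
  rw [← hn, h2, List.drop_append_of_le_length (l₁ := A ++ [z])
    (l₂ := B ++ [w] ++ C) (by simp; omega)]
  simp

/-- Lemma 2 of the paper. Let `α` be a terminal-free pattern
with `|var(α)| ≥ 2` and let `Γ = {z_1, …, z_m} ⊆ var(α)` (nonempty). The
following are equivalent: (a) for all distinct `z, z' ∈ Γ`, `α` can be
factorised as `α = β·z·γ·z'·γ'·z·δ` or `α = β·z'·γ·z·γ'·z'·δ`; (b) there is a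
`z ∈ Γ` such that `α = β·z·γ` with `Γ \ {z} ⊆ var(β) ∩ var(γ)`. -/
theorem statement1 (α : List ℕ) (hα : 2 ≤ α.toFinset.card)
    (Γ : Finset ℕ) (hΓsub : Γ ⊆ α.toFinset) (hΓne : Γ.Nonempty) :
    (∀ z ∈ Γ, ∀ z' ∈ Γ, z ≠ z' →
        (∃ β γ γ' δ : List ℕ, α = β ++ [z] ++ γ ++ [z'] ++ γ' ++ [z] ++ δ) ∨
        (∃ β γ γ' δ : List ℕ, α = β ++ [z'] ++ γ ++ [z] ++ γ' ++ [z'] ++ δ)) ↔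
      (∃ z ∈ Γ, ∃ β γ : List ℕ, α = β ++ [z] ++ γ ∧
        (Γ \ {z} : Finset ℕ) ⊆ β.toFinset ∩ γ.toFinset) := by
  constructor
  · intro ha
    obtain ⟨z, hzΓ, hzmax⟩ := Finset.exists_max_image Γ (fun w => α.idxOf w) hΓne
    have hzα : z ∈ α := by simpa using hΓsub hzΓ
    set p := α.idxOf z with hp
    have hplt : p < α.length := List.idxOf_lt_length_iff.mpr hzα
    refine ⟨z, hzΓ, α.take p, α.drop (p+1), ?_, ?_⟩
    · conv_lhs => rw [← List.take_append_drop p α]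
      rw [List.drop_eq_getElem_cons hplt, List.getElem_idxOf hplt]
      simp
    · intro w hw
      simp only [Finset.mem_sdiff, Finset.mem_singleton] at hw
      obtain ⟨hwΓ, hwz⟩ := hw
      have hwα : w ∈ α := by simpa using hΓsub hwΓ
      have hwlt : α.idxOf w < α.length := List.idxOf_lt_length_iff.mpr hwα
      have hne : α.idxOf w ≠ p := by
        intro hEq
        exact hwz ((List.idxOf_inj hwα).mp hEq)
      have hlt : α.idxOf w < p := lt_of_le_of_ne (hzmax w hwΓ) hne
      have hβ : w ∈ α.take p := by
        have h2 : (α.take p)[α.idxOf w]'(by simp; omega) = w := by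
          rw [List.getElem_take]; exact List.getElem_idxOf hwlt
        exact h2 ▸ List.getElem_mem _
      have hγ : w ∈ α.drop (p+1) := by
        rcases ha z hzΓ w hwΓ (fun h => hwz h.symm) with
          ⟨β, γ, γ', δ, hfac⟩ | ⟨β, γ, γ', δ, hfac⟩
        · exact mem_drop_occ (A := β) (B := γ) (C := γ' ++ [z] ++ δ)
            (by simp [hfac])
        · exact mem_drop_occ (A := β ++ [w] ++ γ) (B := γ') (C := δ)
            (by simp [hfac])
      simp [Finset.mem_inter, List.mem_toFinset, hβ, hγ]
  · rintro ⟨z, hzΓ, β, γ, hfac, hsub⟩ u huΓ v hvΓ huv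
    have hmem : ∀ w ∈ Γ, w ≠ z → w ∈ β ∧ w ∈ γ := by
      intro w hw hwz
      have h := hsub (Finset.mem_sdiff.mpr ⟨hw, by simpa using hwz⟩)
      simpa [Finset.mem_inter, List.mem_toFinset] using h
    by_cases huz : u = z
    · subst huz
      obtain ⟨hvβ, hvγ⟩ := hmem v hvΓ (Ne.symm huv)
      obtain ⟨s, t, hs⟩ := List.append_of_mem hvβ
      obtain ⟨s', t', hs'⟩ := List.append_of_mem hvγ
      right
      exact ⟨s, t, s', t', by rw [hfac, hs, hs']; simp⟩
    · by_cases hvz : v = z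
      · subst hvz
        obtain ⟨huβ, huγ⟩ := hmem u huΓ huv
        obtain ⟨s, t, hs⟩ := List.append_of_mem huβ
        obtain ⟨s', t', hs'⟩ := List.append_of_mem huγ
        left
        exact ⟨s, t, s', t', by rw [hfac, hs, hs']; simp⟩
      · obtain ⟨huβ, huγ⟩ := hmem u huΓ huz
        obtain ⟨hvβ, hvγ⟩ := hmem v hvΓ hvz
        obtain ⟨s, t, hs⟩ := List.append_of_mem huβ
        by_cases hvs : v ∈ s
        · obtain ⟨s1, s2, hs1⟩ := List.append_of_mem hvs
          obtain ⟨g1, g2, hg⟩ := List.append_of_mem hvγ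
          right
          exact ⟨s1, s2, t ++ [z] ++ g1, g2, by rw [hfac, hs, hs1, hg]; simp⟩
        · have hvt : v ∈ t := by
            rw [hs] at hvβ
            simp only [List.mem_append, List.mem_cons] at hvβ
            rcases hvβ with h | h | h
            · exact absurd h hvs
            · exact absurd h.symm huv
            · exact h
          obtain ⟨t1, t2, ht⟩ := List.append_of_mem hvt
          obtain ⟨g1, g2, hg⟩ := List.append_of_mem huγ
          left
          exact ⟨s, t1, t2 ++ [z] ++ g1, g2, by rw [hfac, hs, ht, hg]; simp⟩
end

section
/- Let α = y_1·y_2·…·y_n be a terminal-free pattern, let ((l_1,r_1),(l_2,r_2),…,(l_k,r_k)) be a complete matching order for α, and let w be a word over Σ. If there exists a factorisation w = u_1·u_2·…·u_n with u_i ∈ Σ* such that u_{l_j} = u_{r_j} for every j with 1 ≤ j ≤ k, then w ∈ L(α). -/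
/-! Patterns: variables are natural numbers; a terminal-free pattern is a
nonempty list of variables, with 1-based positions. -/

/-- The variable at (1-based) position `j` of the pattern `α`. -/
def patAt (α : List ℕ) (j : ℕ) : ℕ := α.getD (j - 1) 0

/-- The set of (1-based) positions of the pattern `α` carrying the variable `x`. -/
def varpos (α : List ℕ) (x : ℕ) : Finset ℕ :=
  (Finset.Icc 1 α.length).filter (fun j => patAt α j = x)

/-- A matching order for the variable `x` in the pattern `α`: a sequence of
`|α|_x − 1` pairs of positions of `x`, each with smaller first component,
whose edge set makes the set of positions of `x` a connected graph. -/
def IsMatchingOrder (α : List ℕ) (x : ℕ) (M : List (ℕ × ℕ)) : Prop :=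
  M.length + 1 = α.count x ∧
  (∀ p ∈ M, p.1 ∈ varpos α x ∧ p.2 ∈ varpos α x ∧ p.1 < p.2) ∧
  ∀ a ∈ varpos α x, ∀ b ∈ varpos α x,
    Relation.ReflTransGen (fun u v => (u, v) ∈ M ∨ (v, u) ∈ M) a b

/-- A complete matching order for `α`: a tuple of `Σ_{x ∈ var(α)} (|α|_x − 1)`
matching positions containing, for every variable `x` of `α`, all the elements
of some matching order for `x` in `α`. -/
def IsCompleteMatchingOrder (α : List ℕ) (C : List (ℕ × ℕ)) : Prop :=
  ∃ M : ℕ → List (ℕ × ℕ),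
    (∀ x ∈ α.toFinset, IsMatchingOrder α x (M x)) ∧
    C.length = ∑ x ∈ α.toFinset, (α.count x - 1) ∧
    ∀ x ∈ α.toFinset, ∀ p ∈ M x, p ∈ C
/-- The pattern language of a terminal-free pattern `α` over the terminal
alphabet `A`: all images of `α` under substitutions (morphisms `X* → A*`,
determined by the images of the variables). -/
def PatternLang (A : Type) (α : List ℕ) : Set (List A) :=
  {w | ∃ σ : ℕ → List A, w = (α.map σ).flatten}
/-- Let `α = y_1 ⋯ y_n` be a terminal-free pattern,
`((l_1,r_1), …, (l_k,r_k))` a complete matching order for `α`, and `w` a word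
over the finite alphabet `A`. If there is a factorisation `w = u_1 ⋯ u_n` with
`u_{l_j} = u_{r_j}` for every `j`, then `w ∈ L(α)`. -/
theorem statement4 {A : Type} [Fintype A] (α : List ℕ) (hα : α ≠ [])
    (C : List (ℕ × ℕ)) (hC : IsCompleteMatchingOrder α C) (w : List A)
    (hfac : ∃ u : List (List A), u.length = α.length ∧ u.flatten = w ∧
      ∀ p ∈ C, u.getD (p.1 - 1) [] = u.getD (p.2 - 1) []) :
    w ∈ PatternLang A α := by
  obtain ⟨u, hlen, hflat, hequ⟩ := hfac
  obtain ⟨M, hM, -, hMC⟩ := hC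
  refine ⟨fun x => u.getD (α.idxOf x) [], ?_⟩
  rw [← hflat]
  congr 1
  apply List.ext_getElem (by simp [hlen])
  intro i h1 h2
  simp only [List.getElem_map]
  have hiα : i < α.length := by simpa using h2
  set x := α[i]'hiα with hxdef
  have hxmem : x ∈ α := List.getElem_mem hiα
  have hx : x ∈ α.toFinset := by simpa using hxmem
  obtain ⟨-, -, hconn⟩ := hM x hx
  have key : ∀ a b, Relation.ReflTransGen
      (fun p q => (p, q) ∈ M x ∨ (q, p) ∈ M x) a b →
      u.getD (a - 1) [] = u.getD (b - 1) [] := by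
    intro a b h
    induction h with
    | refl => rfl
    | tail h1 h2 ih =>
      rcases h2 with h2 | h2
      · exact ih.trans (hequ _ (hMC x hx _ h2))
      · exact ih.trans (hequ _ (hMC x hx _ h2)).symm
  have hidx : α.idxOf x < α.length := List.idxOf_lt_length_iff.mpr hxmem
  have ha : α.idxOf x + 1 ∈ varpos α x := by
    rw [varpos, Finset.mem_filter, Finset.mem_Icc]; simp only [patAt]
    refine ⟨⟨Nat.le_add_left _ _, by omega⟩, ?_⟩
    simp only [Nat.add_sub_cancel]
    rw [List.getD_eq_getElem _ _ hidx]
    exact List.getElem_idxOf hidx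
  have hb : i + 1 ∈ varpos α x := by
    rw [varpos, Finset.mem_filter, Finset.mem_Icc]; simp only [patAt]
    refine ⟨⟨Nat.le_add_left _ _, by omega⟩, ?_⟩
    simp only [Nat.add_sub_cancel]
    rw [List.getD_eq_getElem _ _ hiα]
  have := key _ _ (hconn _ ha _ hb)
  simp only [Nat.add_sub_cancel] at this
  rw [List.getD_eq_getElem _ _ h1] at this
  exact this.symm
end

section
/- Let D be a nonempty finite string over the variable set X, with positions 1,…,k', and for each position i let s_i := |{x | ∃ j, j' with 1 ≤ j < i < j' ≤ k' and D_j = D_{j'} = x ≠ D_i}|. Let Γ ⊆ var(D) with |Γ| ≥ 2 be such that for all z, z' ∈ Γ with z ≠ z', D can be factorised into D = β·z·γ·z'·γ'·z·δ or into D = β·z'·γ·z·γ'·z'·δ. Then max{s_i | 1 ≤ i ≤ k'} ≥ |Γ| − 1. -/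
open Classical in
/-- For a string `D` of variables (0-based indexing), `sVal D i` is the number of
variables `x ≠ D_i` having an occurrence both strictly before and strictly after
position `i` in `D`. -/
noncomputable def sVal (D : List ℕ) (i : ℕ) : ℕ :=
  (D.toFinset.filter (fun x =>
    x ≠ D.getD i 0 ∧ (∃ j, j < i ∧ D.getD j 0 = x) ∧
    ∃ j', i < j' ∧ j' < D.length ∧ D.getD j' 0 = x)).card

/-- getD at the position of an explicit occurrence. -/
lemma getD_occ (A B : List ℕ) (x : ℕ) : (A ++ [x] ++ B).getD A.length 0 = x := by
  rw [List.getD_append _ _ _ _ (by simp), List.getD_append_right _ _ _ _ le_rfl]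
  simp

/-- `indexOf` is minimal among occurrence positions. -/
lemma indexOf_le_occ (A B : List ℕ) (x : ℕ) :
    (A ++ [x] ++ B).idxOf x ≤ A.length := by
  by_contra h
  push_neg at h
  have hlen : A.length < (A ++ [x] ++ B).length := by simp
  have hx : (A ++ [x] ++ B)[A.length]'hlen = x := by
    have := getD_occ A B x
    rwa [List.getD_eq_getElem _ _ hlen] at this
  have := List.not_of_lt_findIdx (p := (· == x)) (xs := A ++ [x] ++ B) h
  rw [beq_eq_false_iff_ne] at this
  exact this hx

/-- Let `D` be a nonempty string of variables with
`s_i := |{x | ∃ j < i < j', D_j = D_{j'} = x ≠ D_i}|`, and let `Γ ⊆ var(D)`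
with `|Γ| ≥ 2` be such that for all distinct `z, z' ∈ Γ`, `D` can be
factorised as `D = β·z·γ·z'·γ'·z·δ` or as `D = β·z'·γ·z·γ'·z'·δ`. Then
`max{s_i} ≥ |Γ| − 1`. -/
theorem statement9 (D : List ℕ) (hD : D ≠ [])
    (Γ : Finset ℕ) (hsub : Γ ⊆ D.toFinset) (hcard : 2 ≤ Γ.card)
    (hcross : ∀ z ∈ Γ, ∀ z' ∈ Γ, z ≠ z' →
      (∃ β γ γ' δ : List ℕ, D = β ++ [z] ++ γ ++ [z'] ++ γ' ++ [z] ++ δ) ∨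
      (∃ β γ γ' δ : List ℕ, D = β ++ [z'] ++ γ ++ [z] ++ γ' ++ [z'] ++ δ)) :
    Γ.card - 1 ≤ (Finset.range D.length).sup (sVal D) := by
  classical
  have hne : Γ.Nonempty := Finset.card_pos.mp (by omega)
  obtain ⟨x0, hx0Γ, hx0max⟩ := Γ.exists_max_image (fun x => D.idxOf x) hne
  set p := D.idxOf x0 with hp
  have hx0D : x0 ∈ D := List.mem_toFinset.mp (hsub hx0Γ)
  have hplt : p < D.length := List.idxOf_lt_length_iff.mpr hx0D
  have hDp : D.getD p 0 = x0 := by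
    rw [List.getD_eq_getElem _ _ hplt]
    exact List.getElem_idxOf hplt
  -- every z ∈ Γ, z ≠ x0 is counted at position p
  have hkey : ∀ z ∈ Γ, z ≠ x0 →
      z ∈ D.toFinset.filter (fun x =>
        x ≠ D.getD p 0 ∧ (∃ j, j < p ∧ D.getD j 0 = x) ∧
        ∃ j', p < j' ∧ j' < D.length ∧ D.getD j' 0 = x) := by
    intro z hzΓ hzx0
    have hzD : z ∈ D := List.mem_toFinset.mp (hsub hzΓ)
    have hzlt : D.idxOf z < D.length := List.idxOf_lt_length_iff.mpr hzD
    -- first occurrence of z is strictly before p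
    have hlt : D.idxOf z < p := by
      rcases lt_or_eq_of_le (hx0max z hzΓ) with h | h
      · exact h
      · exfalso
        apply hzx0
        have h1 : D.getD (D.idxOf z) 0 = z := by
          rw [List.getD_eq_getElem _ _ hzlt]; exact List.getElem_idxOf hzlt
        rw [← h1, h, hDp]
    -- occurrence of z strictly after p
    have hafter : ∃ j', p < j' ∧ j' < D.length ∧ D.getD j' 0 = z := by
      rcases hcross z hzΓ x0 hx0Γ hzx0 with ⟨β, γ, γ', δ, hfac⟩ | ⟨β, γ, γ', δ, hfac⟩
      · -- D = β z γ x0 γ' z δ ; second z at position |β|+|γ|+|γ'|+2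
        refine ⟨β.length + γ.length + γ'.length + 2, ?_, ?_, ?_⟩
        · -- x0 occurs at β.length + γ.length + 1, so p ≤ that
          have : p ≤ (β ++ [z] ++ γ).length := by
            have := indexOf_le_occ (β ++ [z] ++ γ) (γ' ++ [z] ++ δ) x0
            rw [hp, hfac]
            simpa using this
          simp at this; omega
        · rw [hfac]
          simp only [List.length_append, List.length_cons, List.length_nil]
          omega
        · have heq : D = (β ++ [z] ++ γ ++ [x0] ++ γ') ++ [z] ++ δ := by
            rw [hfac]
          have hA : β.length + γ.length + γ'.length + 2
              = (β ++ [z] ++ γ ++ [x0] ++ γ').length := by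
            simp only [List.length_append, List.length_cons, List.length_nil]
            omega
          rw [heq, hA]
          exact getD_occ _ _ z
      · -- D = β x0 γ z γ' x0 δ ; z at position |β|+|γ|+1
        refine ⟨β.length + γ.length + 1, ?_, ?_, ?_⟩
        · have : p ≤ β.length := by
            have := indexOf_le_occ β (γ ++ [z] ++ γ' ++ [x0] ++ δ) x0
            rw [hp, hfac]
            simpa using this
          omega
        · rw [hfac]
          simp only [List.length_append, List.length_cons, List.length_nil]
          omega
        · have heq : D = (β ++ [x0] ++ γ) ++ [z] ++ (γ' ++ [x0] ++ δ) := by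
            rw [hfac]; simp only [List.append_assoc]
          have hA : β.length + γ.length + 1 = (β ++ [x0] ++ γ).length := by
            simp only [List.length_append, List.length_cons, List.length_nil]
            omega
          rw [heq, hA]
          exact getD_occ _ _ z
    refine Finset.mem_filter.mpr ⟨List.mem_toFinset.mpr hzD, ?_, ?_, hafter⟩
    · rw [hDp]; exact hzx0
    · refine ⟨D.idxOf z, hlt, ?_⟩
      rw [List.getD_eq_getElem _ _ hzlt]; exact List.getElem_idxOf hzlt
  have hsubset : Γ.erase x0 ⊆ D.toFinset.filter (fun x =>
      x ≠ D.getD p 0 ∧ (∃ j, j < p ∧ D.getD j 0 = x) ∧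
      ∃ j', p < j' ∧ j' < D.length ∧ D.getD j' 0 = x) := by
    intro z hz
    exact hkey z (Finset.mem_of_mem_erase hz) (Finset.ne_of_mem_erase hz)
  have hcard' : Γ.card - 1 ≤ sVal D p := by
    have := Finset.card_le_card hsubset
    rw [Finset.card_erase_of_mem hx0Γ] at this
    exact le_trans this (le_of_eq rfl)
  exact le_trans hcard' (Finset.le_sup (Finset.mem_range.mpr hplt))
end
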